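/- For positive integers N > m > 0 and t > 0, define d_{N,t}(m) = min { δ ∈ ℕ : C(t - δ + m, m) ≤ N }. Then d_{N,t}(m) ≤ max { 1, t - ⌊(log₂ N)² / (4m)⌋ }. -/

import Mathlib

open Real

-- Lemma A: for x ≥ 1, sqrt x * (log (x+1) - log x) ≤ log 2
lemma auxA : ∀ x : ℝ, 1 ≤ x → Real.sqrt x * (Real.log (x+1) - Real.log x) ≤ Real.log 2 := by
  have key : AntitoneOn (fun x : ℝ => Real.sqrt x * (Real.log (x+1) - Real.log x)) (Set.Ici 1) := by
    have hderiv : ∀ x ∈ interior (Set.Ici (1:ℝ)),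
        HasDerivAt (fun x : ℝ => Real.sqrt x * (Real.log (x+1) - Real.log x))
          (1/(2*Real.sqrt x) * (Real.log (x+1) - Real.log x) + Real.sqrt x * (1/(x+1) - 1/x)) x := by
      intro x hx
      rw [interior_Ici] at hx
      have hx0 : (0:ℝ) < x := lt_trans one_pos hx
      have h1 : HasDerivAt (fun x : ℝ => Real.sqrt x) (1/(2*Real.sqrt x)) x :=
        Real.hasDerivAt_sqrt (ne_of_gt hx0)
      have h2 : HasDerivAt (fun x : ℝ => Real.log (x+1)) (1/(x+1)) x := by
        have := ((hasDerivAt_id x).add_const 1).log (by positivity)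
        simpa using this
      have h3 : HasDerivAt (fun x : ℝ => Real.log x) (1/x) x := by
        simpa [one_div] using Real.hasDerivAt_log (ne_of_gt hx0)
      exact h1.mul (h2.sub h3)
    apply antitoneOn_of_deriv_nonpos (convex_Ici 1)
    · apply ContinuousOn.mul Real.continuous_sqrt.continuousOn
      apply ContinuousOn.sub
      · exact ContinuousOn.log (by fun_prop) (fun x hx => by simp at hx; positivity)
      · exact ContinuousOn.log (by fun_prop) (fun x hx => by simp at hx; positivity)
    · intro x hx
      exact (hderiv x hx).differentiableAt.differentiableWithinAt
    · intro x hx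
      rw [(hderiv x hx).deriv]
      rw [interior_Ici] at hx
      have hx0 : (0:ℝ) < x := lt_trans one_pos hx
      have hs : (0:ℝ) < Real.sqrt x := Real.sqrt_pos.2 hx0
      have hs2 : Real.sqrt x * Real.sqrt x = x := Real.mul_self_sqrt (le_of_lt hx0)
      -- log(x+1) - log x = log((x+1)/x) ≤ (x+1)/x - 1 = 1/x
      have hlog : Real.log (x+1) - Real.log x ≤ 1/x := by
        rw [← Real.log_div (by positivity) (ne_of_gt hx0)]
        have := Real.log_le_sub_one_of_pos (show (0:ℝ) < (x+1)/x by positivity)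
        calc Real.log ((x+1)/x) ≤ (x+1)/x - 1 := this
        _ = 1/x := by field_simp; ring
      have h2 : 1/(2*Real.sqrt x) * (Real.log (x+1) - Real.log x) ≤ 1/(2*Real.sqrt x) * (1/x) := by
        apply mul_le_mul_of_nonneg_left hlog (by positivity)
      have hr1 : (1:ℝ) ≤ Real.sqrt x := by
        rw [show (1:ℝ) = Real.sqrt 1 by simp]
        exact Real.sqrt_le_sqrt (le_of_lt hx)
      have h3 : 1/(2*Real.sqrt x) * (1/x) + Real.sqrt x * (1/(x+1) - 1/x) ≤ 0 := by
        set r := Real.sqrt x with hr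
        rw [← hs2]
        have e : 1/(2*r)*(1/(r*r)) + r*(1/(r*r+1) - 1/(r*r))
            = (1 - r*r)/(2*r*(r*r)*(r*r+1)) := by
          field_simp
          ring
        rw [e]
        apply div_nonpos_of_nonpos_of_nonneg
        · nlinarith
        · positivity
      linarith
  intro x hx
  have h := key (Set.mem_Ici.mpr le_rfl) hx hx
  norm_num at h
  convert h using 2 <;> norm_num


-- Lemma B: for x ≥ 1, (x+1) log(x+1) ≤ 2 √x log 2 + x log x
lemma auxB : ∀ x : ℝ, 1 ≤ x →
    (x+1) * Real.log (x+1) ≤ 2 * Real.sqrt x * Real.log 2 + x * Real.log x := by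
  have key : MonotoneOn
      (fun x : ℝ => 2 * Real.sqrt x * Real.log 2 + x * Real.log x - (x+1) * Real.log (x+1))
      (Set.Ici 1) := by
    have hderiv : ∀ x ∈ interior (Set.Ici (1:ℝ)),
        HasDerivAt (fun x : ℝ => 2 * Real.sqrt x * Real.log 2 + x * Real.log x
            - (x+1) * Real.log (x+1))
          (2 * (1/(2*Real.sqrt x)) * Real.log 2 + (Real.log x + 1)
            - (Real.log (x+1) + 1)) x := by
      intro x hx
      rw [interior_Ici] at hx
      have hx0 : (0:ℝ) < x := lt_trans one_pos hx
      have h1 : HasDerivAt (fun x : ℝ => 2 * Real.sqrt x * Real.log 2)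
          (2 * (1/(2*Real.sqrt x)) * Real.log 2) x := by
        exact (((Real.hasDerivAt_sqrt (ne_of_gt hx0)).const_mul 2).mul_const (Real.log 2))
      have h2 : HasDerivAt (fun x : ℝ => x * Real.log x) (Real.log x + 1) x := by
        have := (hasDerivAt_id x).mul ((Real.hasDerivAt_log (ne_of_gt hx0)))
        refine this.congr_deriv ?_
        simp [hx0.ne']
      have h3 : HasDerivAt (fun x : ℝ => (x+1) * Real.log (x+1)) (Real.log (x+1) + 1) x := by
        have hlog : HasDerivAt (fun x : ℝ => Real.log (x+1)) (1/(x+1)) x := by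
          simpa using ((hasDerivAt_id x).add_const 1).log (by positivity)
        have := ((hasDerivAt_id x).add_const 1).mul hlog
        refine this.congr_deriv ?_
        have : x + 1 ≠ 0 := by positivity
        simp [this]
      exact (h1.add h2).sub h3
    apply monotoneOn_of_deriv_nonneg (convex_Ici 1)
    · apply ContinuousOn.sub
      · apply ContinuousOn.add
        · exact (continuousOn_const.mul Real.continuous_sqrt.continuousOn).mul continuousOn_const
        · exact continuousOn_id.mul (ContinuousOn.log continuousOn_id
            (fun x hx => by simp at hx; positivity))
      · exact (continuousOn_id.add continuousOn_const).mul (ContinuousOn.log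
          (continuousOn_id.add continuousOn_const) (fun x hx => by simp at hx; positivity))
    · intro x hx
      exact (hderiv x hx).differentiableAt.differentiableWithinAt
    · intro x hx
      rw [(hderiv x hx).deriv]
      rw [interior_Ici] at hx
      have hx0 : (0:ℝ) < x := lt_trans one_pos hx
      have hs : (0:ℝ) < Real.sqrt x := Real.sqrt_pos.2 hx0
      have hA := auxA x (le_of_lt hx)
      -- log(x+1) - log x ≤ log 2 / √x
      have : Real.log (x+1) - Real.log x ≤ Real.log 2 / Real.sqrt x := by
        rw [le_div_iff₀ hs]
        linarith [auxA x (le_of_lt hx), mul_comm (Real.sqrt x) (Real.log (x+1) - Real.log x)]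
      have e : 2 * (1/(2*Real.sqrt x)) * Real.log 2 = Real.log 2 / Real.sqrt x := by
        field_simp
      rw [e]
      linarith
  intro x hx
  have h := key (Set.mem_Ici.mpr le_rfl) hx hx
  simp only [Real.sqrt_one, Real.log_one] at h
  norm_num at h
  linarith

-- Lemma C: for 0 < b ≤ a, (a+b) log(a+b) ≤ a log a + b log b + 2 √(ab) log 2
lemma auxC : ∀ a b : ℝ, 0 < b → b ≤ a →
    (a+b) * Real.log (a+b) ≤ a * Real.log a + b * Real.log b
      + 2 * Real.sqrt (a*b) * Real.log 2 := by
  intro a b hb hba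
  have ha : (0:ℝ) < a := lt_of_lt_of_le hb hba
  have hx1 : (1:ℝ) ≤ a/b := (one_le_div hb).mpr hba
  have hB := auxB (a/b) hx1
  -- multiply by b
  have hBb : b * ((a/b+1) * Real.log (a/b+1))
      ≤ b * (2 * Real.sqrt (a/b) * Real.log 2 + (a/b) * Real.log (a/b)) :=
    mul_le_mul_of_nonneg_left hB (le_of_lt hb)
  have e1 : a/b + 1 = (a+b)/b := by field_simp
  have e2 : Real.log ((a+b)/b) = Real.log (a+b) - Real.log b :=
    Real.log_div (by positivity) (ne_of_gt hb)
  have e3 : Real.log (a/b) = Real.log a - Real.log b :=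
    Real.log_div (ne_of_gt ha) (ne_of_gt hb)
  have e4 : b * Real.sqrt (a/b) = Real.sqrt (a*b) := by
    rw [Real.sqrt_div ha.le, show b * (Real.sqrt a / Real.sqrt b) = Real.sqrt a * (b / Real.sqrt b) from by ring, Real.div_sqrt, ← Real.sqrt_mul ha.le]
  rw [e1, e2] at hBb
  rw [e3] at hBb
  -- LHS: b * ((a+b)/b * (log(a+b) - log b)) = (a+b)*(log(a+b)-log b)
  have eL : b * ((a+b)/b * (Real.log (a+b) - Real.log b))
      = (a+b) * Real.log (a+b) - (a+b) * Real.log b := by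
    field_simp
  have eR : b * (2 * Real.sqrt (a/b) * Real.log 2 + (a/b) * (Real.log a - Real.log b))
      = 2 * Real.sqrt (a*b) * Real.log 2 + a * Real.log a - a * Real.log b := by
    rw [mul_add]
    have : b * (2 * Real.sqrt (a/b) * Real.log 2) = 2 * Real.sqrt (a*b) * Real.log 2 := by
      rw [← e4]; ring
    rw [this]
    field_simp
    ring
  rw [eL, eR] at hBb
  have : (a+b) * Real.log b - a * Real.log b = b * Real.log b := by ring
  linarith [hBb]


-- symmetric version of C
lemma auxC' : ∀ a b : ℝ, 0 < a → 0 < b →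
    (a+b) * Real.log (a+b) ≤ a * Real.log a + b * Real.log b
      + 2 * Real.sqrt (a*b) * Real.log 2 := by
  intro a b ha hb
  rcases le_total b a with h | h
  · exact auxC a b hb h
  · have := auxC b a ha h
    rw [add_comm b a, mul_comm b a] at this
    linarith

-- Lemma D: binomial bound
lemma auxD (s m : ℕ) (hs : 1 ≤ s) (hm : 1 ≤ m) :
    (((s+m).choose m : ℝ)) * ((m:ℝ)/(s+m))^m * ((s:ℝ)/(s+m))^s ≤ 1 := by
  have hnpos : (0:ℝ) < ((s:ℝ)+(m:ℝ)) := by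
    have : (0:ℝ) < (m:ℝ) := by exact_mod_cast hm
    have : (0:ℝ) < (s:ℝ) := by exact_mod_cast hs
    linarith [show (0:ℝ) < (m:ℝ) from by exact_mod_cast hm]
  set p : ℝ := (m:ℝ)/(s+m) with hp
  set q : ℝ := (s:ℝ)/(s+m) with hq
  have hpq : p + q = 1 := by
    rw [hp, hq]
    field_simp
    push_cast
    ring
  have hsum : (p + q)^(s+m) = ∑ k ∈ Finset.range (s+m+1), p^k * q^(s+m-k) * ((s+m).choose k) :=
    add_pow p q (s+m)
  have hterm : p^m * q^(s+m-m) * (((s+m).choose m : ℝ))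
      ≤ ∑ k ∈ Finset.range (s+m+1), p^k * q^(s+m-k) * ((s+m).choose k) := by
    apply Finset.single_le_sum (f := fun k => p^k * q^(s+m-k) * (((s+m).choose k : ℝ)))
    · intro i _
      have hp0 : 0 ≤ p := by positivity
      have hq0 : 0 ≤ q := by positivity
      positivity
    · exact Finset.mem_range.mpr (by omega)
  rw [← hsum, hpq, one_pow] at hterm
  have : s + m - m = s := by omega
  rw [this] at hterm
  calc ((s+m).choose m : ℝ) * p^m * q^s = p^m * q^s * ((s+m).choose m : ℝ) := by ring
  _ ≤ 1 := hterm

lemma auxMain (s m N : ℕ) (hs : 1 ≤ s) (hm : 1 ≤ m) (hmN : m < N)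
    (h : (s:ℝ) ≤ (Real.logb 2 N)^2 / (4*(m:ℝ))) : (s+m).choose m ≤ N := by
  have hm0 : (0:ℝ) < (m:ℝ) := by exact_mod_cast hm
  have hs0 : (0:ℝ) < (s:ℝ) := by exact_mod_cast hs
  have hn0 : (0:ℝ) < (s:ℝ) + (m:ℝ) := by linarith
  have hN1 : 2 ≤ N := by omega
  have hN0 : (0:ℝ) < (N:ℝ) := by positivity
  have hC0 : 0 < (s+m).choose m := Nat.choose_pos (by omega)
  have hC0' : (0:ℝ) < ((s+m).choose m : ℝ) := by exact_mod_cast hC0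
  set p : ℝ := (m:ℝ)/((s:ℝ)+(m:ℝ)) with hp
  set q : ℝ := (s:ℝ)/((s:ℝ)+(m:ℝ)) with hq
  have hp0 : 0 < p := by positivity
  have hq0 : 0 < q := by positivity
  have hD := auxD s m hs hm
  have h2 : ((s+m).choose m : ℝ) ≤ 1 / (p^m * q^s) := by
    rw [le_div_iff₀ (by positivity)]
    calc ((s+m).choose m : ℝ) * (p^m * q^s) = ((s+m).choose m : ℝ) * p^m * q^s := by ring
    _ ≤ 1 := by
      convert hD using 3 <;> push_cast <;> ring
  have hlog : Real.log ((s+m).choose m : ℝ) ≤ Real.log (1/(p^m * q^s)) :=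
    Real.log_le_log hC0' h2
  have hexp : Real.log (1/(p^m*q^s))
      = (m:ℝ) * (Real.log ((s:ℝ)+m) - Real.log m) + (s:ℝ) * (Real.log ((s:ℝ)+m) - Real.log s) := by
    rw [one_div, Real.log_inv, Real.log_mul (by positivity) (by positivity),
      Real.log_pow, Real.log_pow, hp, hq,
      Real.log_div (ne_of_gt hm0) (ne_of_gt hn0), Real.log_div (ne_of_gt hs0) (ne_of_gt hn0)]
    ring
  have hCineq := auxC' (s:ℝ) (m:ℝ) hs0 hm0
  have hkey : Real.log ((s+m).choose m : ℝ)
      ≤ 2 * Real.sqrt ((s:ℝ)*m) * Real.log 2 := by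
    rw [hexp] at hlog
    nlinarith [hCineq]
  -- bound the sqrt by logb
  have hL0 : 0 ≤ Real.logb 2 N := Real.logb_nonneg one_lt_two (by exact_mod_cast Nat.one_le_iff_ne_zero.mpr (by omega))
  have h4 : 4*((s:ℝ)*m) ≤ (Real.logb 2 N)^2 := by
    have := (le_div_iff₀ (by positivity : (0:ℝ) < 4*(m:ℝ))).mp h
    nlinarith [this]
  have hsqrt : 2 * Real.sqrt ((s:ℝ)*m) ≤ Real.logb 2 N := by
    have e1 : Real.sqrt (4*((s:ℝ)*m)) = 2 * Real.sqrt ((s:ℝ)*m) := by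
      rw [show (4:ℝ)*((s:ℝ)*m) = 2^2 * ((s:ℝ)*m) by ring, Real.sqrt_mul (by positivity),
        Real.sqrt_sq (by norm_num)]
    calc 2 * Real.sqrt ((s:ℝ)*m) = Real.sqrt (4*((s:ℝ)*m)) := e1.symm
    _ ≤ Real.sqrt ((Real.logb 2 N)^2) := Real.sqrt_le_sqrt h4
    _ = Real.logb 2 N := Real.sqrt_sq hL0
  have hlog2pos : (0:ℝ) < Real.log 2 := Real.log_pos (by norm_num)
  have hfin : Real.log ((s+m).choose m : ℝ) ≤ Real.log N := by
    have : Real.logb 2 N * Real.log 2 = Real.log N := by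
      rw [Real.logb]
      field_simp
    calc Real.log ((s+m).choose m : ℝ) ≤ 2 * Real.sqrt ((s:ℝ)*m) * Real.log 2 := hkey
    _ ≤ Real.logb 2 N * Real.log 2 := by
      apply mul_le_mul_of_nonneg_right hsqrt (le_of_lt hlog2pos)
    _ = Real.log N := this
  have := (Real.log_le_log_iff hC0' hN0).mp hfin
  exact_mod_cast this

theorem stmt_9 (N t m : ℕ) (hm : 0 < m) (hN : m < N) (ht : 0 < t) :
    sInf {δ : ℕ | (t - δ + m).choose m ≤ N} ≤
      max 1 (t - ⌊(Real.logb 2 N) ^ 2 / (4 * m)⌋₊) := by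
  set L := ⌊(Real.logb 2 N) ^ 2 / (4 * (m:ℝ))⌋₊ with hL
  apply Nat.sInf_le
  show (t - max 1 (t - L) + m).choose m ≤ N
  set s := t - max 1 (t - L) with hsdef
  rcases Nat.eq_zero_or_pos s with h0 | hpos
  · rw [h0]
    simp only [Nat.zero_add, Nat.choose_self]
    omega
  · have hsL : s ≤ L := by omega
    apply auxMain s m N hpos hm hN
    calc (s:ℝ) ≤ (L:ℝ) := by exact_mod_cast hsL
    _ ≤ (Real.logb 2 N) ^ 2 / (4 * (m:ℝ)) := Nat.floor_le (by positivity)
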